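/- Let μ ∈ (0, 1/2) and let M be the 2×2 matrix with rows (−1, 1) and (−μ(1−μ), −2), with eigenvectors p = (1, −μ) and q = (1, μ−1) for the eigenvalues −1−μ and μ−2 respectively. Suppose Y : [0,∞) → ℝ² is continuously differentiable, Y(s) ≠ 0 for all s ≥ 0, |Y(s)| → 0 as s → ∞, and there is K > 0 with |Y'(s) − M·Y(s)| ≤ K|Y(s)|² for all s ≥ 0. Then there exist a, b ∈ ℝ and C > 0 such that |Y(s) − a·e^{−(1+μ)s}·p − b·e^{(μ−2)s}·q| ≤ C·e^{−2(1+μ)s} for all s ≥ 0. -/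

import Mathlib

open scoped Topology

open Set MeasureTheory in
private lemma exp_decay_integral' (A σ : ℝ) (hσ : 0 < σ) (s : ℝ) :
    ∫ t in Set.Ioi s, A * Real.exp (-σ * t) = A / σ * Real.exp (-σ * s) := by
  have hderiv : ∀ x ∈ Set.Ioi s, HasDerivAt (fun t => -(A/σ) * Real.exp (-σ*t))
      (A * Real.exp (-σ * x)) x := by
    intro x _
    have h1 : HasDerivAt (fun t : ℝ => -σ * t) (-σ) x := by
      simpa using (hasDerivAt_id x).const_mul (-σ)
    have h2 := (Real.hasDerivAt_exp (-σ*x)).comp x h1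
    have h3 := h2.const_mul (-(A/σ))
    refine h3.congr_deriv ?_
    field_simp
  have hint : IntegrableOn (fun t => A * Real.exp (-σ * t)) (Set.Ioi s) :=
    (exp_neg_integrableOn_Ioi s hσ).const_mul A
  have htend : Filter.Tendsto (fun t => -(A/σ) * Real.exp (-σ*t)) Filter.atTop (nhds 0) := by
    have h0 : Filter.Tendsto (fun t : ℝ => σ * t) Filter.atTop Filter.atTop :=
      Filter.Tendsto.const_mul_atTop hσ Filter.tendsto_id
    have h1 : Filter.Tendsto (fun t : ℝ => Real.exp (-σ*t)) Filter.atTop (nhds 0) := by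
      have h2 := Real.tendsto_exp_neg_atTop_nhds_zero.comp h0
      have : (fun t : ℝ => Real.exp (-σ*t)) = ((fun x => Real.exp (-x)) ∘ fun t => σ * t) := by
        funext t; simp [Function.comp, neg_mul]
      rw [this]; exact h2
    simpa using h1.const_mul (-(A/σ))
  have := MeasureTheory.integral_Ioi_of_hasDerivAt_of_tendsto
    ((continuous_const.mul (Real.continuous_exp.comp
        (continuous_const.mul continuous_id))).continuousWithinAt)
    hderiv hint htend
  rw [this]
  simp [Function.comp]

open Set MeasureTheory in
private lemma decay_limit' (g g' : ℝ → ℝ)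
    (hderiv : ∀ s ∈ Set.Ici (0:ℝ), HasDerivWithinAt g (g' s) (Set.Ici 0) s)
    (hg'c : ContinuousOn g' (Set.Ici 0))
    (A σ : ℝ) (hσ : 0 < σ)
    (hbound : ∀ s ∈ Set.Ici (0:ℝ), |g' s| ≤ A * Real.exp (-σ * s)) :
    ∃ l : ℝ, ∀ s ∈ Set.Ici (0:ℝ), |g s - l| ≤ A / σ * Real.exp (-σ * s) := by
  have hgc : ContinuousOn g (Ici 0) := fun x hx => (hderiv x hx).continuousWithinAt
  have hIb : ∀ s : ℝ, 0 ≤ s → IntegrableOn (fun t => A * Real.exp (-σ * t)) (Ioi s) :=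
    fun s _ => (exp_neg_integrableOn_Ioi s hσ).const_mul A
  have hg'int : ∀ s : ℝ, 0 ≤ s → IntegrableOn g' (Ioi s) := by
    intro s hs
    refine MeasureTheory.Integrable.mono' (hIb s hs)
      ((hg'c.mono (fun x hx => le_of_lt (lt_of_le_of_lt hs hx))).aestronglyMeasurable
        measurableSet_Ioi) ?_
    filter_upwards [ae_restrict_mem measurableSet_Ioi] with t ht
    exact (by rw [Real.norm_eq_abs]; exact hbound t (le_of_lt (lt_of_le_of_lt hs ht)))
  have hftc : ∀ s : ℝ, 0 ≤ s → g s - g 0 = ∫ t in Ioc (0:ℝ) s, g' t := by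
    intro s hs
    have h := intervalIntegral.integral_eq_sub_of_hasDeriv_right_of_le hs
      (hgc.mono (Icc_subset_Ici_self))
      (fun x hx => (hderiv x (le_of_lt hx.1)).mono_of_mem_nhdsWithin
        (by exact mem_nhdsWithin_of_mem_nhds (Ici_mem_nhds hx.1)))
      ((intervalIntegrable_iff_integrableOn_Ioc_of_le hs).2
        ((hg'int 0 le_rfl).mono Ioc_subset_Ioi_self le_rfl))
    rw [intervalIntegral.integral_of_le hs] at h
    rw [← h]
  refine ⟨g 0 + ∫ t in Ioi (0:ℝ), g' t, ?_⟩
  intro s hs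
  have hsplit : (∫ t in Ioc (0:ℝ) s, g' t) + ∫ t in Ioi s, g' t = ∫ t in Ioi (0:ℝ), g' t := by
    rw [← MeasureTheory.setIntegral_union (Ioc_disjoint_Ioi le_rfl) measurableSet_Ioi
      ((hg'int 0 le_rfl).mono Ioc_subset_Ioi_self le_rfl) (hg'int s hs),
      Ioc_union_Ioi_eq_Ioi hs]
  have hkey : g s - (g 0 + ∫ t in Ioi (0:ℝ), g' t) = -∫ t in Ioi s, g' t := by
    rw [← hsplit]
    linarith [hftc s hs]
  rw [hkey, abs_neg]
  calc |∫ t in Ioi s, g' t| ≤ ∫ t in Ioi s, A * Real.exp (-σ * t) := by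
        rw [← Real.norm_eq_abs]
        refine MeasureTheory.norm_integral_le_of_norm_le (hIb s hs) ?_
        filter_upwards [ae_restrict_mem measurableSet_Ioi] with t ht
        exact (by rw [Real.norm_eq_abs]; exact hbound t (Set.mem_Ici.mpr (le_of_lt (lt_of_le_of_lt (Set.mem_Ici.mp hs) ht))))
    _ = A / σ * Real.exp (-σ * s) := exp_decay_integral' A σ hσ s

private lemma duhamel' (x x' : ℝ → ℝ) (lam σ A : ℝ) (hσ : 0 < σ)
    (hderiv : ∀ s ∈ Set.Ici (0:ℝ), HasDerivWithinAt x (x' s) (Set.Ici 0) s)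
    (hcx' : ContinuousOn x' (Set.Ici 0))
    (hbound : ∀ s ∈ Set.Ici (0:ℝ), |x' s - lam * x s| ≤ A * Real.exp ((lam - σ) * s)) :
    ∃ l : ℝ, ∀ s ∈ Set.Ici (0:ℝ),
      |x s - l * Real.exp (lam * s)| ≤ A / σ * Real.exp ((lam - σ) * s) := by
  have hcx : ContinuousOn x (Set.Ici 0) := fun s hs => (hderiv s hs).continuousWithinAt
  have hexp : ∀ c : ℝ, ∀ s : ℝ, HasDerivAt (fun t : ℝ => Real.exp (c*t)) (c * Real.exp (c*s)) s := by
    intro c s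
    have h1 : HasDerivAt (fun t : ℝ => c * t) c s := by simpa using (hasDerivAt_id s).const_mul c
    simpa [mul_comm, Function.comp_def] using (Real.hasDerivAt_exp (c*s)).comp s h1
  have hgd : ∀ s ∈ Set.Ici (0:ℝ), HasDerivWithinAt (fun s => Real.exp (-lam*s) * x s)
      (Real.exp (-lam*s) * (x' s - lam * x s)) (Set.Ici 0) s := by
    intro s hs
    have := ((hexp (-lam) s).hasDerivWithinAt.mul (hderiv s hs))
    refine this.congr_deriv ?_
    ring
  have hg'c : ContinuousOn (fun s => Real.exp (-lam*s) * (x' s - lam * x s)) (Set.Ici 0) := by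
    exact ((Real.continuous_exp.comp (continuous_const.mul continuous_id)).continuousOn).mul
      (hcx'.sub (continuousOn_const.mul hcx))
  have hgb : ∀ s ∈ Set.Ici (0:ℝ),
      |Real.exp (-lam*s) * (x' s - lam * x s)| ≤ A * Real.exp (-σ * s) := by
    intro s hs
    rw [abs_mul, abs_of_pos (Real.exp_pos _)]
    calc Real.exp (-lam*s) * |x' s - lam * x s|
        ≤ Real.exp (-lam*s) * (A * Real.exp ((lam - σ) * s)) :=
          mul_le_mul_of_nonneg_left (hbound s hs) (le_of_lt (Real.exp_pos _))
      _ = A * Real.exp (-σ * s) := by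
          rw [mul_comm (Real.exp (-lam*s)), mul_assoc, ← Real.exp_add]
          ring_nf
  obtain ⟨l, hl⟩ := decay_limit' _ _ hgd hg'c A σ hσ hgb
  refine ⟨l, fun s hs => ?_⟩
  have hx : x s = Real.exp (lam*s) * (Real.exp (-lam*s) * x s) := by
    rw [← mul_assoc, ← Real.exp_add]
    simp
  calc |x s - l * Real.exp (lam * s)|
      = Real.exp (lam*s) * |Real.exp (-lam*s) * x s - l| := by
        rw [← abs_of_pos (Real.exp_pos (lam*s)), ← abs_mul]
        congr 1
        rw [abs_of_pos (Real.exp_pos (lam*s))]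
        nth_rewrite 1 [hx]
        ring
    _ ≤ Real.exp (lam*s) * (A / σ * Real.exp (-σ * s)) :=
        mul_le_mul_of_nonneg_left (hl s hs) (le_of_lt (Real.exp_pos _))
    _ = A / σ * Real.exp ((lam - σ) * s) := by
        rw [mul_comm (Real.exp (lam*s)), mul_assoc, ← Real.exp_add]
        ring_nf

private lemma hasDerivAt_exp_mul' (c x : ℝ) :
    HasDerivAt (fun t : ℝ => Real.exp (c*t)) (c * Real.exp (c*x)) x := by
  have h1 : HasDerivAt (fun t : ℝ => c * t) c x := by simpa using (hasDerivAt_id x).const_mul c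
  simpa [mul_comm, Function.comp_def] using (Real.hasDerivAt_exp (c*x)).comp x h1

private lemma coord_abs_le' (x : EuclideanSpace ℝ (Fin 2)) (i : Fin 2) : |x i| ≤ ‖x‖ := by
  rw [EuclideanSpace.norm_eq, ← Real.sqrt_sq_eq_abs]
  apply Real.sqrt_le_sqrt
  rw [Fin.sum_univ_two]
  fin_cases i <;> simp [Real.norm_eq_abs, sq_abs] <;> nlinarith [sq_nonneg (x 0), sq_nonneg (x 1)]

private lemma norm_le_coords' (x : EuclideanSpace ℝ (Fin 2)) : ‖x‖ ≤ |x 0| + |x 1| := by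
  rw [EuclideanSpace.norm_eq, Fin.sum_univ_two]
  rw [show |x 0| + |x 1| = Real.sqrt ((|x 0| + |x 1|)^2) from (Real.sqrt_sq (by positivity)).symm]
  apply Real.sqrt_le_sqrt
  simp [Real.norm_eq_abs, sq_abs]
  nlinarith [abs_nonneg (x 0), abs_nonneg (x 1), sq_abs (x 0), sq_abs (x 1)]

/-- The action of the matrix `M = [[-1, 1], [-μ(1-μ), -2]]` on a vector of `ℝ²`. -/
noncomputable def Mmul (μ : ℝ) (v : EuclideanSpace ℝ (Fin 2)) : EuclideanSpace ℝ (Fin 2) :=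
  (EuclideanSpace.equiv (Fin 2) ℝ).symm ![-v 0 + v 1, -(μ * (1 - μ)) * v 0 - 2 * v 1]

/-- The eigenvector `p = (1, -μ)` of `M` for the eigenvalue `-1-μ`. -/
noncomputable def pvec (μ : ℝ) : EuclideanSpace ℝ (Fin 2) :=
  (EuclideanSpace.equiv (Fin 2) ℝ).symm ![1, -μ]

/-- The eigenvector `q = (1, μ-1)` of `M` for the eigenvalue `μ-2`. -/
noncomputable def qvec (μ : ℝ) : EuclideanSpace ℝ (Fin 2) :=
  (EuclideanSpace.equiv (Fin 2) ℝ).symm ![1, μ - 1]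

set_option maxHeartbeats 1000000 in
theorem ode_asymptotic_expansion (μ : ℝ) (hμ : 0 < μ) (hμ' : μ < 1 / 2)
    (Y : ℝ → EuclideanSpace ℝ (Fin 2))
    (hY_C1 : ContDiffOn ℝ 1 Y (Set.Ici 0))
    (hY_ne : ∀ s : ℝ, 0 ≤ s → Y s ≠ 0)
    (hY_lim : Filter.Tendsto (fun s => ‖Y s‖) Filter.atTop (𝓝 0))
    (K : ℝ) (hK : 0 < K)
    (hY_ode : ∀ s : ℝ, 0 ≤ s →
      ‖derivWithin Y (Set.Ici 0) s - Mmul μ (Y s)‖ ≤ K * ‖Y s‖ ^ 2) :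
    ∃ (a b C : ℝ), 0 < C ∧ ∀ s : ℝ, 0 ≤ s →
      ‖Y s - Real.exp (-(1 + μ) * s) • (a • pvec μ) -
          Real.exp ((μ - 2) * s) • (b • qvec μ)‖ ≤
        C * Real.exp (-2 * (1 + μ) * s) := by
  clear hY_ne
  have hm : (0:ℝ) < 1 - 2*μ := by linarith
  set m : ℝ := 1 - 2*μ with hm_def
  set Y' : ℝ → EuclideanSpace ℝ (Fin 2) := fun s => derivWithin Y (Set.Ici 0) s with hY'_def
  have hYd : ∀ s ∈ Set.Ici (0:ℝ), HasDerivWithinAt Y (Y' s) (Set.Ici 0) s :=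
    fun s hs => (hY_C1.differentiableOn one_ne_zero s hs).hasDerivWithinAt
  have hYcont : ContinuousOn Y (Set.Ici 0) := hY_C1.continuousOn
  have hY'cont : ContinuousOn Y' (Set.Ici 0) := by
    have h0 : ContDiffOn ℝ 0 Y' (Set.Ici 0) :=
      hY_C1.derivWithin (uniqueDiffOn_Ici 0) (le_refl 1)
    exact h0.continuousOn
  have hYcd : ∀ (i : Fin 2), ∀ s ∈ Set.Ici (0:ℝ),
      HasDerivWithinAt (fun s => Y s i) (Y' s i) (Set.Ici 0) s :=
    fun i s hs => by
      have h := (EuclideanSpace.proj (𝕜 := ℝ) i).hasFDerivAt.comp_hasDerivWithinAt s (hYd s hs)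
      exact h
  have hYccont : ∀ (i : Fin 2), ContinuousOn (fun s => Y s i) (Set.Ici 0) :=
    fun i => (EuclideanSpace.proj i).continuous.comp_continuousOn hYcont
  have hY'ccont : ∀ (i : Fin 2), ContinuousOn (fun s => Y' s i) (Set.Ici 0) :=
    fun i => (EuclideanSpace.proj i).continuous.comp_continuousOn hY'cont
  set al : ℝ → ℝ := fun s => ((1-μ) * Y s 0 + Y s 1) / m with hal_def
  set be : ℝ → ℝ := fun s => -((μ * Y s 0 + Y s 1) / m) with hbe_def
  set al' : ℝ → ℝ := fun s => ((1-μ) * Y' s 0 + Y' s 1) / m with hal'_def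
  set be' : ℝ → ℝ := fun s => -((μ * Y' s 0 + Y' s 1) / m) with hbe'_def
  set ea : ℝ → ℝ := fun s =>
    ((1-μ) * (Y' s - Mmul μ (Y s)) 0 + (Y' s - Mmul μ (Y s)) 1) / m with hea_def
  set eb : ℝ → ℝ := fun s =>
    -((μ * (Y' s - Mmul μ (Y s)) 0 + (Y' s - Mmul μ (Y s)) 1) / m) with heb_def
  have hcomp0 : ∀ s, (Y' s - Mmul μ (Y s)) 0 = Y' s 0 - (-(Y s 0) + Y s 1) := fun s => rfl
  have hcomp1 : ∀ s, (Y' s - Mmul μ (Y s)) 1 =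
      Y' s 1 - (-(μ * (1 - μ)) * Y s 0 - 2 * Y s 1) := fun s => rfl
  have haldd : ∀ s ∈ Set.Ici (0:ℝ), HasDerivWithinAt al (al' s) (Set.Ici 0) s :=
    fun s hs => (((hYcd 0 s hs).const_mul (1-μ)).add (hYcd 1 s hs)).div_const m
  have hbedd : ∀ s ∈ Set.Ici (0:ℝ), HasDerivWithinAt be (be' s) (Set.Ici 0) s :=
    fun s hs => ((((hYcd 0 s hs).const_mul μ).add (hYcd 1 s hs)).div_const m).neg
  have hode_al : ∀ s, al' s = -(1+μ) * al s + ea s := by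
    intro s
    simp only [hal'_def, hal_def, hea_def, hcomp0, hcomp1]
    field_simp
    ring
  have hode_be : ∀ s, be' s = (μ-2) * be s + eb s := by
    intro s
    simp only [hbe'_def, hbe_def, heb_def, hcomp0, hcomp1]
    field_simp
    ring
  have hrec : ∀ s, Y s = al s • pvec μ + be s • qvec μ := by
    intro s
    have h0 : Y s 0 = al s * (1:ℝ) + be s * (1:ℝ) := by
      simp only [hal_def, hbe_def]; field_simp; ring
    have h1 : Y s 1 = al s * (-μ) + be s * (μ - 1) := by
      simp only [hal_def, hbe_def]; field_simp; ring
    ext i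
    show Y s i = al s * pvec μ i + be s * qvec μ i
    fin_cases i
    · exact h0
    · exact h1
  -- continuity of the coordinates
  have halc : ContinuousOn al (Set.Ici 0) :=
    ((continuousOn_const.mul (hYccont 0)).add (hYccont 1)).div_const m
  have hbec : ContinuousOn be (Set.Ici 0) :=
    (((continuousOn_const.mul (hYccont 0)).add (hYccont 1)).div_const m).neg
  have hal'c : ContinuousOn al' (Set.Ici 0) :=
    ((continuousOn_const.mul (hY'ccont 0)).add (hY'ccont 1)).div_const m
  have hbe'c : ContinuousOn be' (Set.Ici 0) :=
    (((continuousOn_const.mul (hY'ccont 0)).add (hY'ccont 1)).div_const m).neg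
  have heac : ContinuousOn ea (Set.Ici 0) := by
    have hid : ea = fun s => al' s + (1+μ) * al s := by
      funext s; rw [hode_al s]; ring
    rw [hid]; exact hal'c.add (continuousOn_const.mul halc)
  have hebc : ContinuousOn eb (Set.Ici 0) := by
    have hid : eb = fun s => be' s - (μ-2) * be s := by
      funext s; rw [hode_be s]; ring
    rw [hid]; exact hbe'c.sub (continuousOn_const.mul hbec)
  -- forcing bounds
  set KE : ℝ := 2/m * K with hKE_def
  have hKE : 0 < KE := by positivity
  have hea_b : ∀ s ∈ Set.Ici (0:ℝ), |ea s| ≤ KE * ‖Y s‖^2 := by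
    intro s hs
    have h0 : |(Y' s - Mmul μ (Y s)) 0| ≤ K * ‖Y s‖^2 :=
      le_trans (coord_abs_le' _ 0) (hY_ode s hs)
    have h1 : |(Y' s - Mmul μ (Y s)) 1| ≤ K * ‖Y s‖^2 :=
      le_trans (coord_abs_le' _ 1) (hY_ode s hs)
    simp only [hea_def]
    rw [abs_div, abs_of_pos hm, div_le_iff₀ hm]
    calc |(1-μ) * (Y' s - Mmul μ (Y s)) 0 + (Y' s - Mmul μ (Y s)) 1|
        ≤ |1-μ| * |(Y' s - Mmul μ (Y s)) 0| + |(Y' s - Mmul μ (Y s)) 1| := by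
          refine (abs_add_le _ _).trans ?_
          rw [abs_mul]
      _ ≤ 2 * (K * ‖Y s‖^2) := by
          rw [abs_of_nonneg (by linarith : (0:ℝ) ≤ 1-μ)]
          nlinarith [abs_nonneg ((Y' s - Mmul μ (Y s)) 0), abs_nonneg ((Y' s - Mmul μ (Y s)) 1)]
      _ = KE * ‖Y s‖^2 * m := by rw [hKE_def]; field_simp
  have heb_b : ∀ s ∈ Set.Ici (0:ℝ), |eb s| ≤ KE * ‖Y s‖^2 := by
    intro s hs
    have h0 : |(Y' s - Mmul μ (Y s)) 0| ≤ K * ‖Y s‖^2 :=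
      le_trans (coord_abs_le' _ 0) (hY_ode s hs)
    have h1 : |(Y' s - Mmul μ (Y s)) 1| ≤ K * ‖Y s‖^2 :=
      le_trans (coord_abs_le' _ 1) (hY_ode s hs)
    simp only [heb_def]
    rw [abs_neg, abs_div, abs_of_pos hm, div_le_iff₀ hm]
    calc |μ * (Y' s - Mmul μ (Y s)) 0 + (Y' s - Mmul μ (Y s)) 1|
        ≤ |μ| * |(Y' s - Mmul μ (Y s)) 0| + |(Y' s - Mmul μ (Y s)) 1| := by
          refine (abs_add_le _ _).trans ?_
          rw [abs_mul]
      _ ≤ 2 * (K * ‖Y s‖^2) := by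
          rw [abs_of_pos hμ]
          nlinarith [abs_nonneg ((Y' s - Mmul μ (Y s)) 0), abs_nonneg ((Y' s - Mmul μ (Y s)) 1)]
      _ = KE * ‖Y s‖^2 * m := by rw [hKE_def]; field_simp
  -- norm comparisons
  have hYle : ∀ s, ‖Y s‖ ≤ 2 * (|al s| + |be s|) := by
    intro s
    have h0 : Y s 0 = al s + be s := by simp only [hal_def, hbe_def]; field_simp; ring
    have h1 : Y s 1 = -μ * al s + (μ-1) * be s := by
      simp only [hal_def, hbe_def]; field_simp; ring
    calc ‖Y s‖ ≤ |Y s 0| + |Y s 1| := norm_le_coords' _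
      _ ≤ 2 * (|al s| + |be s|) := by
        rw [h0, h1]
        have t1 := abs_add_le (al s) (be s)
        have t2 := abs_add_le (-μ * al s) ((μ-1) * be s)
        rw [abs_mul, abs_mul] at t2
        have t3 : |(-μ)| = μ := by rw [abs_neg, abs_of_pos hμ]
        have t4 : |μ-1| = 1-μ := by rw [abs_of_nonpos (by linarith)]; ring
        rw [t3, t4] at t2
        nlinarith [abs_nonneg (al s), abs_nonneg (be s)]
  have hNal : ∀ s, |al s| ≤ 2/m * ‖Y s‖ := by
    intro s
    simp only [hal_def]
    rw [abs_div, abs_of_pos hm, div_le_iff₀ hm]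
    have h0 := coord_abs_le' (Y s) 0
    have h1 := coord_abs_le' (Y s) 1
    calc |(1-μ) * Y s 0 + Y s 1| ≤ |1-μ| * |Y s 0| + |Y s 1| := by
          refine (abs_add_le _ _).trans ?_; rw [abs_mul]
      _ ≤ 2 * ‖Y s‖ := by
          rw [abs_of_nonneg (by linarith : (0:ℝ) ≤ 1-μ)]
          nlinarith [abs_nonneg (Y s 0), abs_nonneg (Y s 1)]
      _ = 2/m * ‖Y s‖ * m := by field_simp
  have hNbe : ∀ s, |be s| ≤ 2/m * ‖Y s‖ := by
    intro s
    simp only [hbe_def]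
    rw [abs_neg, abs_div, abs_of_pos hm, div_le_iff₀ hm]
    have h0 := coord_abs_le' (Y s) 0
    have h1 := coord_abs_le' (Y s) 1
    calc |μ * Y s 0 + Y s 1| ≤ |μ| * |Y s 0| + |Y s 1| := by
          refine (abs_add_le _ _).trans ?_; rw [abs_mul]
      _ ≤ 2 * ‖Y s‖ := by
          rw [abs_of_pos hμ]
          nlinarith [abs_nonneg (Y s 0), abs_nonneg (Y s 1)]
      _ = 2/m * ‖Y s‖ * m := by field_simp
  have hYsq : ∀ s, ‖Y s‖^2 ≤ 8 * (al s * al s + be s * be s) := by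
    intro s
    have h1 : ‖Y s‖^2 ≤ (2 * (|al s| + |be s|))^2 :=
      pow_le_pow_left₀ (norm_nonneg _) (hYle s) 2
    refine h1.trans ?_
    have e1 : |al s| * |al s| = al s * al s := abs_mul_abs_self _
    have e2 : |be s| * |be s| = be s * be s := abs_mul_abs_self _
    nlinarith [sq_nonneg (|al s| - |be s|), e1, e2]
  -- the energy function
  set φ : ℝ → ℝ := fun s => al s * al s + be s * be s with hφ_def
  set φ' : ℝ → ℝ := fun s => 2 * al s * al' s + 2 * be s * be' s with hφ'_def
  have hφd : ∀ s ∈ Set.Ici (0:ℝ), HasDerivWithinAt φ (φ' s) (Set.Ici 0) s := by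
    intro s hs
    have h := ((haldd s hs).mul (haldd s hs)).add ((hbedd s hs).mul (hbedd s hs))
    refine h.congr_deriv ?_
    simp only [hφ'_def]
    ring
  have hφc : ContinuousOn φ (Set.Ici 0) := (halc.mul halc).add (hbec.mul hbec)
  have hφ0 : ∀ s, 0 ≤ φ s := fun s => by
    simp only [hφ_def]; nlinarith [mul_self_nonneg (al s), mul_self_nonneg (be s)]
  set ρ : ℝ := 2 + μ/2 with hρ_def
  have hρpos : 0 < ρ := by rw [hρ_def]; linarith
  set ε : ℝ := 3*μ/(32*KE) with hε_def
  have hε : 0 < ε := by positivity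
  have hkey : ∀ s ∈ Set.Ici (0:ℝ), |al s| + |be s| ≤ ε → ρ * φ s + φ' s ≤ 0 := by
    intro s hs hN
    have h1 : al s * ea s ≤ |al s| * (KE * ‖Y s‖^2) := by
      calc al s * ea s ≤ |al s * ea s| := le_abs_self _
        _ = |al s| * |ea s| := abs_mul _ _
        _ ≤ |al s| * (KE * ‖Y s‖^2) := mul_le_mul_of_nonneg_left (hea_b s hs) (abs_nonneg _)
    have h2 : be s * eb s ≤ |be s| * (KE * ‖Y s‖^2) := by
      calc be s * eb s ≤ |be s * eb s| := le_abs_self _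
        _ = |be s| * |eb s| := abs_mul _ _
        _ ≤ |be s| * (KE * ‖Y s‖^2) := mul_le_mul_of_nonneg_left (heb_b s hs) (abs_nonneg _)
    have h3 : (|al s| + |be s|) * (KE * ‖Y s‖^2) ≤ ε * (KE * (8 * φ s)) := by
      refine mul_le_mul hN ?_ (by positivity) (le_of_lt hε)
      refine mul_le_mul_of_nonneg_left ?_ (le_of_lt hKE)
      simpa [hφ_def] using hYsq s
    have h4 : ε * (KE * (8 * φ s)) = 3*μ/4 * φ s := by
      rw [hε_def]; field_simp; ring
    have h5 : 2*(μ-2)*(be s * be s) ≤ -2*(1+μ)*(be s * be s) := by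
      nlinarith [mul_self_nonneg (be s)]
    simp only [hφ'_def, hφ_def, hρ_def]
    rw [hode_al s, hode_be s]
    simp only [hφ_def] at h3 h4
    clear_value al be al' be' ea eb KE ε ρ φ φ' Y' m
    nlinarith [h1, h2, h3, h4, h5, mul_self_nonneg (al s), mul_self_nonneg (be s)]
  -- choose s₀ beyond which the coordinates are small
  have hNtend : Filter.Tendsto (fun s => |al s| + |be s|) Filter.atTop (𝓝 0) := by
    have hb : ∀ s, |al s| + |be s| ≤ 4/m * ‖Y s‖ := by
      intro s
      have t1 := hNal s
      have t2 := hNbe s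
      have t3 : 2/m * ‖Y s‖ + 2/m * ‖Y s‖ = 4/m * ‖Y s‖ := by ring
      linarith
    have hlim : Filter.Tendsto (fun s => 4/m * ‖Y s‖) Filter.atTop (𝓝 0) := by
      simpa using hY_lim.const_mul (4/m)
    exact squeeze_zero (fun s => by positivity) hb hlim
  obtain ⟨s₁, hs₁⟩ := (Filter.eventually_atTop).1 (hNtend.eventually (gt_mem_nhds hε))
  set s₀ : ℝ := max s₁ 1 with hs₀_def
  have hs₀0 : (0:ℝ) < s₀ := lt_of_lt_of_le one_pos (le_max_right _ _)
  have hsub : Set.Ici s₀ ⊆ Set.Ici (0:ℝ) := fun x hx => le_trans (le_of_lt hs₀0) hx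
  have hNsmall : ∀ s, s₀ ≤ s → |al s| + |be s| ≤ ε :=
    fun s hs => le_of_lt (hs₁ s (le_trans (le_max_left _ _) hs))
  -- the rescaled energy is antitone beyond s₀
  have hψ : AntitoneOn (fun s => Real.exp (ρ*s) * φ s) (Set.Ici s₀) := by
    refine antitoneOn_of_hasDerivWithinAt_nonpos (convex_Ici s₀)
      (((Real.continuous_exp.comp (continuous_const.mul continuous_id)).continuousOn).mul
        (hφc.mono hsub))
      (f' := fun x => Real.exp (ρ*x) * (ρ * φ x + φ' x)) ?_ ?_
    · intro x hx
      rw [interior_Ici] at hx ⊢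
      have hx0 : (0:ℝ) < x := lt_trans hs₀0 hx
      have hφat : HasDerivAt φ (φ' x) x :=
        (hφd x (le_of_lt hx0)).hasDerivAt (Ici_mem_nhds hx0)
      have hexp : HasDerivAt (fun t : ℝ => Real.exp (ρ*t)) (ρ * Real.exp (ρ*x)) x :=
        hasDerivAt_exp_mul' ρ x
      refine HasDerivAt.hasDerivWithinAt ?_
      have := hexp.mul hφat
      refine this.congr_deriv ?_
      ring
    · intro x hx
      rw [interior_Ici] at hx
      have hx0 : (0:ℝ) ≤ x := le_of_lt (lt_trans hs₀0 hx)
      exact mul_nonpos_of_nonneg_of_nonpos (le_of_lt (Real.exp_pos _))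
        (hkey x hx0 (hNsmall x (le_of_lt hx)))
  -- global exponential decay of the energy
  obtain ⟨xm, hxm, hxmax⟩ := isCompact_Icc.exists_isMaxOn
    (⟨0, le_refl (0:ℝ), le_of_lt hs₀0⟩ : (Set.Icc (0:ℝ) s₀).Nonempty)
    (hφc.mono (fun x hx => hx.1))
  set Cφ : ℝ := max (Real.exp (ρ*s₀) * φ s₀) (φ xm * Real.exp (ρ*s₀)) with hCφ_def
  have hCφ0 : 0 ≤ Cφ :=
    le_trans (mul_nonneg (le_of_lt (Real.exp_pos _)) (hφ0 s₀)) (le_max_left _ _)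
  have hφdecay : ∀ s ∈ Set.Ici (0:ℝ), φ s ≤ Cφ * Real.exp (-ρ*s) := by
    intro s hs
    rcases le_total s s₀ with h | h
    · have h1 : φ s ≤ φ xm := hxmax ⟨hs, h⟩
      have h2 : (1:ℝ) ≤ Real.exp (ρ*s₀) * Real.exp (-ρ*s) := by
        rw [← Real.exp_add]
        refine Real.one_le_exp ?_
        nlinarith [hρpos]
      calc φ s ≤ φ xm := h1
        _ = φ xm * 1 := by ring
        _ ≤ φ xm * (Real.exp (ρ*s₀) * Real.exp (-ρ*s)) :=
            mul_le_mul_of_nonneg_left h2 (hφ0 xm)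
        _ = (φ xm * Real.exp (ρ*s₀)) * Real.exp (-ρ*s) := by ring
        _ ≤ Cφ * Real.exp (-ρ*s) :=
            mul_le_mul_of_nonneg_right (le_max_right _ _) (le_of_lt (Real.exp_pos _))
    · have h1 : Real.exp (ρ*s) * φ s ≤ Real.exp (ρ*s₀) * φ s₀ :=
        hψ (Set.self_mem_Ici) h h
      have h2 : φ s = Real.exp (-ρ*s) * (Real.exp (ρ*s) * φ s) := by
        rw [← mul_assoc, ← Real.exp_add]; simp
      calc φ s = Real.exp (-ρ*s) * (Real.exp (ρ*s) * φ s) := h2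
        _ ≤ Real.exp (-ρ*s) * (Real.exp (ρ*s₀) * φ s₀) :=
            mul_le_mul_of_nonneg_left h1 (le_of_lt (Real.exp_pos _))
        _ ≤ Real.exp (-ρ*s) * Cφ :=
            mul_le_mul_of_nonneg_left (le_max_left _ _) (le_of_lt (Real.exp_pos _))
        _ = Cφ * Real.exp (-ρ*s) := by ring
  -- round 1: forcing bounds with rate ρ
  set A1 : ℝ := KE * (8 * Cφ) with hA1_def
  have hA10 : 0 ≤ A1 := mul_nonneg (le_of_lt hKE) (by linarith)
  have hea_d : ∀ s ∈ Set.Ici (0:ℝ), |ea s| ≤ A1 * Real.exp (-ρ*s) := by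
    intro s hs
    refine (hea_b s hs).trans ?_
    have h1 : ‖Y s‖^2 ≤ 8 * (Cφ * Real.exp (-ρ*s)) := by
      have := hYsq s
      have h2 := hφdecay s hs
      simp only [hφ_def] at h2
      linarith
    rw [hA1_def]
    calc KE * ‖Y s‖^2 ≤ KE * (8*(Cφ * Real.exp (-ρ*s))) :=
          mul_le_mul_of_nonneg_left h1 (le_of_lt hKE)
      _ = KE * (8*Cφ) * Real.exp (-ρ*s) := by ring
  have heb_d : ∀ s ∈ Set.Ici (0:ℝ), |eb s| ≤ A1 * Real.exp (-ρ*s) := by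
    intro s hs
    refine (heb_b s hs).trans ?_
    have h1 : ‖Y s‖^2 ≤ 8 * (Cφ * Real.exp (-ρ*s)) := by
      have := hYsq s
      have h2 := hφdecay s hs
      simp only [hφ_def] at h2
      linarith
    rw [hA1_def]
    calc KE * ‖Y s‖^2 ≤ KE * (8*(Cφ * Real.exp (-ρ*s))) :=
          mul_le_mul_of_nonneg_left h1 (le_of_lt hKE)
      _ = KE * (8*Cφ) * Real.exp (-ρ*s) := by ring
  have hσ1 : (0:ℝ) < 1 - μ/2 := by linarith
  have hbnd1 : ∀ s ∈ Set.Ici (0:ℝ),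
      |al' s - (-(1+μ)) * al s| ≤ A1 * Real.exp ((-(1+μ) - (1 - μ/2)) * s) := by
    intro s hs
    have h1 : al' s - (-(1+μ)) * al s = ea s := by rw [hode_al s]; ring
    have h2 : (-(1+μ) - (1 - μ/2)) * s = -ρ * s := by rw [hρ_def]; ring
    rw [h1, h2]
    exact hea_d s hs
  obtain ⟨a1, ha1⟩ := duhamel' al al' (-(1+μ)) (1 - μ/2) A1 hσ1 haldd hal'c hbnd1
  have hσ2 : (0:ℝ) < 3*μ/2 := by linarith
  have hbnd2 : ∀ s ∈ Set.Ici (0:ℝ),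
      |be' s - (μ-2) * be s| ≤ A1 * Real.exp (((μ-2) - 3*μ/2) * s) := by
    intro s hs
    have h1 : be' s - (μ-2) * be s = eb s := by rw [hode_be s]; ring
    have h2 : ((μ-2) - 3*μ/2) * s = -ρ * s := by rw [hρ_def]; ring
    rw [h1, h2]
    exact heb_d s hs
  obtain ⟨b1, hb1⟩ := duhamel' be be' (μ-2) (3*μ/2) A1 hσ2 hbedd hbe'c hbnd2
  -- |Y| decays at the sharp rate
  set C4 : ℝ := 2*(|a1| + A1/(1-μ/2) + |b1| + A1/(3*μ/2)) with hC4_def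
  have hYd2 : ∀ s ∈ Set.Ici (0:ℝ), ‖Y s‖ ≤ C4 * Real.exp (-(1+μ)*s) := by
    intro s hs
    have hs' : (0:ℝ) ≤ s := hs
    have h1 := ha1 s hs
    have h2 := hb1 s hs
    have hd1 : 0 ≤ A1/(1-μ/2) := div_nonneg hA10 (le_of_lt hσ1)
    have hd2 : 0 ≤ A1/(3*μ/2) := div_nonneg hA10 (le_of_lt hσ2)
    have t2 : Real.exp ((-(1+μ) - (1 - μ/2)) * s) ≤ Real.exp (-(1+μ)*s) := by
      apply Real.exp_le_exp.2
      nlinarith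
    have t3 : Real.exp (((μ-2) - 3*μ/2) * s) ≤ Real.exp (-(1+μ)*s) := by
      apply Real.exp_le_exp.2
      nlinarith
    have t4 : Real.exp ((μ-2)*s) ≤ Real.exp (-(1+μ)*s) := by
      apply Real.exp_le_exp.2
      nlinarith
    have hal_b : |al s| ≤ (|a1| + A1/(1-μ/2)) * Real.exp (-(1+μ)*s) := by
      have t1 : |al s| ≤ |al s - a1 * Real.exp (-(1+μ)*s)| + |a1 * Real.exp (-(1+μ)*s)| := by
        have := abs_add_le (al s - a1 * Real.exp (-(1+μ)*s)) (a1 * Real.exp (-(1+μ)*s))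
        simpa using this
      have t5 : |a1 * Real.exp (-(1+μ)*s)| = |a1| * Real.exp (-(1+μ)*s) := by
        rw [abs_mul, abs_of_pos (Real.exp_pos _)]
      have t6 : A1/(1-μ/2) * Real.exp ((-(1+μ) - (1 - μ/2)) * s)
          ≤ A1/(1-μ/2) * Real.exp (-(1+μ)*s) := mul_le_mul_of_nonneg_left t2 hd1
      linarith [t1, t5, h1, t6]
    have hbe_b : |be s| ≤ (|b1| + A1/(3*μ/2)) * Real.exp (-(1+μ)*s) := by
      have t1 : |be s| ≤ |be s - b1 * Real.exp ((μ-2)*s)| + |b1 * Real.exp ((μ-2)*s)| := by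
        have := abs_add_le (be s - b1 * Real.exp ((μ-2)*s)) (b1 * Real.exp ((μ-2)*s))
        simpa using this
      have t5 : |b1 * Real.exp ((μ-2)*s)| ≤ |b1| * Real.exp (-(1+μ)*s) := by
        rw [abs_mul, abs_of_pos (Real.exp_pos _)]
        exact mul_le_mul_of_nonneg_left t4 (abs_nonneg _)
      have t6 : A1/(3*μ/2) * Real.exp (((μ-2) - 3*μ/2) * s)
          ≤ A1/(3*μ/2) * Real.exp (-(1+μ)*s) := mul_le_mul_of_nonneg_left t3 hd2
      linarith [t1, t5, h2, t6]
    calc ‖Y s‖ ≤ 2 * (|al s| + |be s|) := hYle s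
      _ ≤ C4 * Real.exp (-(1+μ)*s) := by
          rw [hC4_def]
          have := Real.exp_pos (-(1+μ)*s)
          nlinarith [hal_b, hbe_b]
  -- round 2: forcing bounds with the sharp rate
  set A2 : ℝ := KE * C4^2 with hA2_def
  have hA20 : 0 ≤ A2 := mul_nonneg (le_of_lt hKE) (sq_nonneg _)
  have hC40 : 0 ≤ C4 := by
    have hd1 : 0 ≤ A1/(1-μ/2) := div_nonneg hA10 (le_of_lt hσ1)
    have hd2 : 0 ≤ A1/(3*μ/2) := div_nonneg hA10 (le_of_lt hσ2)
    rw [hC4_def]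
    have := abs_nonneg a1
    have := abs_nonneg b1
    linarith
  have hea_d2 : ∀ s ∈ Set.Ici (0:ℝ), |ea s| ≤ A2 * Real.exp (-2*(1+μ)*s) := by
    intro s hs
    refine (hea_b s hs).trans ?_
    have h1 := hYd2 s hs
    have h2 : ‖Y s‖^2 ≤ C4^2 * Real.exp (-2*(1+μ)*s) := by
      have h3 : Real.exp (-(1+μ)*s) * Real.exp (-(1+μ)*s) = Real.exp (-2*(1+μ)*s) := by
        rw [← Real.exp_add]; congr 1; ring
      calc ‖Y s‖^2 ≤ (C4 * Real.exp (-(1+μ)*s))^2 :=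
            pow_le_pow_left₀ (norm_nonneg _) h1 2
        _ = C4^2 * Real.exp (-2*(1+μ)*s) := by rw [← h3]; ring
    rw [hA2_def]
    calc KE * ‖Y s‖^2 ≤ KE * (C4^2 * Real.exp (-2*(1+μ)*s)) :=
          mul_le_mul_of_nonneg_left h2 (le_of_lt hKE)
      _ = KE * C4^2 * Real.exp (-2*(1+μ)*s) := by ring
  have heb_d2 : ∀ s ∈ Set.Ici (0:ℝ), |eb s| ≤ A2 * Real.exp (-2*(1+μ)*s) := by
    intro s hs
    refine (heb_b s hs).trans ?_
    have h1 := hYd2 s hs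
    have h2 : ‖Y s‖^2 ≤ C4^2 * Real.exp (-2*(1+μ)*s) := by
      have h3 : Real.exp (-(1+μ)*s) * Real.exp (-(1+μ)*s) = Real.exp (-2*(1+μ)*s) := by
        rw [← Real.exp_add]; congr 1; ring
      calc ‖Y s‖^2 ≤ (C4 * Real.exp (-(1+μ)*s))^2 :=
            pow_le_pow_left₀ (norm_nonneg _) h1 2
        _ = C4^2 * Real.exp (-2*(1+μ)*s) := by rw [← h3]; ring
    rw [hA2_def]
    calc KE * ‖Y s‖^2 ≤ KE * (C4^2 * Real.exp (-2*(1+μ)*s)) :=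
          mul_le_mul_of_nonneg_left h2 (le_of_lt hKE)
      _ = KE * C4^2 * Real.exp (-2*(1+μ)*s) := by ring
  have hσ3 : (0:ℝ) < 1+μ := by linarith
  have hbnd3 : ∀ s ∈ Set.Ici (0:ℝ),
      |al' s - (-(1+μ)) * al s| ≤ A2 * Real.exp ((-(1+μ) - (1+μ)) * s) := by
    intro s hs
    have h1 : al' s - (-(1+μ)) * al s = ea s := by rw [hode_al s]; ring
    have h2 : (-(1+μ) - (1+μ)) * s = -2*(1+μ)*s := by ring
    rw [h1, h2]
    exact hea_d2 s hs
  obtain ⟨a2, ha2⟩ := duhamel' al al' (-(1+μ)) (1+μ) A2 hσ3 haldd hal'c hbnd3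
  have hσ4 : (0:ℝ) < 3*μ := by linarith
  have hbnd4 : ∀ s ∈ Set.Ici (0:ℝ),
      |be' s - (μ-2) * be s| ≤ A2 * Real.exp (((μ-2) - 3*μ) * s) := by
    intro s hs
    have h1 : be' s - (μ-2) * be s = eb s := by rw [hode_be s]; ring
    have h2 : ((μ-2) - 3*μ) * s = -2*(1+μ)*s := by ring
    rw [h1, h2]
    exact heb_d2 s hs
  obtain ⟨b2, hb2⟩ := duhamel' be be' (μ-2) (3*μ) A2 hσ4 hbedd hbe'c hbnd4
  -- assemble
  refine ⟨a2, b2, 2*(A2/(1+μ)) + 2*(A2/(3*μ)) + 1, ?_, ?_⟩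
  · have hd1 : 0 ≤ A2/(1+μ) := div_nonneg hA20 (le_of_lt hσ3)
    have hd2 : 0 ≤ A2/(3*μ) := div_nonneg hA20 (le_of_lt hσ4)
    linarith
  intro s hs
  have hmem : s ∈ Set.Ici (0:ℝ) := hs
  have h1 := ha2 s hmem
  have h2 := hb2 s hmem
  have he1 : Real.exp ((-(1+μ) - (1+μ)) * s) = Real.exp (-2*(1+μ)*s) := by congr 1; ring
  have he2 : Real.exp (((μ-2) - 3*μ) * s) = Real.exp (-2*(1+μ)*s) := by congr 1; ring
  rw [he1] at h1
  rw [he2] at h2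
  have hid : Y s - Real.exp (-(1 + μ) * s) • (a2 • pvec μ) -
      Real.exp ((μ - 2) * s) • (b2 • qvec μ) =
      (al s - a2 * Real.exp (-(1+μ)*s)) • pvec μ +
      (be s - b2 * Real.exp ((μ-2)*s)) • qvec μ := by
    rw [hrec s]
    module
  rw [hid]
  have hp2 : ‖pvec μ‖ ≤ 2 := by
    refine (norm_le_coords' _).trans ?_
    show |(1:ℝ)| + |(-μ)| ≤ 2
    rw [abs_one, abs_neg, abs_of_pos hμ]
    linarith
  have hq2 : ‖qvec μ‖ ≤ 2 := by
    refine (norm_le_coords' _).trans ?_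
    show |(1:ℝ)| + |μ-1| ≤ 2
    rw [abs_one, abs_of_nonpos (by linarith : μ-1 ≤ 0)]
    linarith
  have hd1 : 0 ≤ A2/(1+μ) := div_nonneg hA20 (le_of_lt hσ3)
  have hd2 : 0 ≤ A2/(3*μ) := div_nonneg hA20 (le_of_lt hσ4)
  have hexp2 : Real.exp (-2*(1+μ)*s) = Real.exp (-2*(1+μ)*s) := rfl
  calc ‖(al s - a2 * Real.exp (-(1+μ)*s)) • pvec μ +
      (be s - b2 * Real.exp ((μ-2)*s)) • qvec μ‖
      ≤ ‖(al s - a2 * Real.exp (-(1+μ)*s)) • pvec μ‖ +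
        ‖(be s - b2 * Real.exp ((μ-2)*s)) • qvec μ‖ := norm_add_le _ _
    _ = |al s - a2 * Real.exp (-(1+μ)*s)| * ‖pvec μ‖ +
        |be s - b2 * Real.exp ((μ-2)*s)| * ‖qvec μ‖ := by
        rw [norm_smul, norm_smul, Real.norm_eq_abs, Real.norm_eq_abs]
    _ ≤ (A2/(1+μ) * Real.exp (-2*(1+μ)*s)) * 2 +
        (A2/(3*μ) * Real.exp (-2*(1+μ)*s)) * 2 := by
        exact add_le_add (mul_le_mul h1 hp2 (norm_nonneg _)
            (mul_nonneg hd1 (le_of_lt (Real.exp_pos _))))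
          (mul_le_mul h2 hq2 (norm_nonneg _)
            (mul_nonneg hd2 (le_of_lt (Real.exp_pos _))))
    _ ≤ (2*(A2/(1+μ)) + 2*(A2/(3*μ)) + 1) * Real.exp (-2*(1+μ)*s) := by
        linarith [Real.exp_pos (-2*(1+μ)*s)]
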